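/- arXiv:1803.01464 — 2 statements merged into one kernel-verified Lean document; each statement's English description precedes it below -/
import Mathlib

section
/- Hydrogen identity over finite fields: for every finite field F, casting the integer matrices L and |H| entrywise into F, the matrix L is invertible over F with inverse L − |H|; that is, L·(L − |H|) = 1 and (L − |H|)·L = 1 hold in the matrix ring over F, so the hydrogen identity |H| = L − L⁻¹ holds over F. -/
open Matrix

variable {V : Type*} [Fintype V] [DecidableEq V]

/-- The simplices of the 1-dimensional simplicial complex of a graph: vertices and edges. -/
abbrev Simplex (G : SimpleGraph V) [DecidableRel G.Adj] := V ⊕ G.edgeSet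

variable (G : SimpleGraph V) [DecidableRel G.Adj]

/-- The vertex set of a simplex. -/
def sVerts : Simplex G → Set V
  | Sum.inl u => {u}
  | Sum.inr f => {w | w ∈ (f : Sym2 V)}

instance (x : Simplex G) (w : V) : Decidable (w ∈ sVerts G x) :=
  match x with
  | Sum.inl u => decidable_of_iff (w = u) (by simp [sVerts])
  | Sum.inr f => decidable_of_iff (w ∈ (f : Sym2 V)) (by simp [sVerts])

/-- Two simplices touch if their vertex sets intersect. -/
def touches (x y : Simplex G) : Prop := ∃ w, w ∈ sVerts G x ∧ w ∈ sVerts G y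

instance : DecidableRel (touches G) := fun _ _ => Fintype.decidableExistsFintype

/-- The connection Laplacian. -/
def connL : Matrix (Simplex G) (Simplex G) ℤ :=
  Matrix.of fun x y => if touches G x y then 1 else 0

/-- The sign-less incidence matrix. -/
def absd : Matrix (Simplex G) (Simplex G) ℤ :=
  Matrix.of fun a b =>
    match a, b with
    | Sum.inr f, Sum.inl u => if u ∈ (f : Sym2 V) then 1 else 0
    | _, _ => 0

/-- The sign-less Hodge Laplacian. -/
def absH : Matrix (Simplex G) (Simplex G) ℤ := (absd G + (absd G)ᵀ) ^ 2

/-- The signature matrix `P_V - P_E`. -/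
def Jm : Matrix (Simplex G) (Simplex G) ℤ :=
  Matrix.of fun x y =>
    match x, y with
    | Sum.inl u, Sum.inl w => if u = w then 1 else 0
    | Sum.inr f, Sum.inr g => if f = g then -1 else 0
    | _, _ => 0

lemma Jm_mul_Jm : Jm G * Jm G = 1 := by
  ext x y
  rw [Matrix.mul_apply, Fintype.sum_sum_type]
  rcases x with u | f <;> rcases y with w | g <;>
    · simp [Jm, Matrix.one_apply, Finset.sum_ite_eq]
      try split <;> simp_all

lemma absd_mul_absd : absd G * absd G = 0 := by
  ext x y
  rw [Matrix.mul_apply, Fintype.sum_sum_type]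
  rcases x with u | f <;> rcases y with w | g <;> simp [absd]

lemma absd_mul_Jm : absd G * Jm G = absd G := by
  ext x y
  rw [Matrix.mul_apply, Fintype.sum_sum_type]
  rcases x with u | f <;> rcases y with w | g <;>
    simp [absd, Jm, Finset.sum_ite_eq, Finset.sum_ite_eq']

lemma Jm_mul_absd : Jm G * absd G = -absd G := by
  ext x y
  rw [Matrix.mul_apply, Fintype.sum_sum_type]
  rcases x with u | f <;> rcases y with w | g
  · simp [absd, Jm]
  · simp [absd, Jm]
  · have hc : ∀ x : G.edgeSet,
        (if w ∈ (x : Sym2 V) then if f = x then (-1:ℤ) else 0 else 0) =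
        (if f = x then (if w ∈ (f : Sym2 V) then (-1:ℤ) else 0) else 0) := by
      intro x
      by_cases hfx : f = x
      · subst hfx; simp
      · simp [hfx]
    simp only [absd, Jm, Matrix.of_apply, mul_ite, mul_neg, mul_one, mul_zero, ite_mul,
      neg_mul, one_mul, zero_mul, Matrix.neg_apply]
    rw [Finset.sum_congr rfl (fun x _ => hc x), Finset.sum_ite_eq]
    simp only [Finset.mem_univ, if_true]
    split <;> simp
  · simp [absd, Jm]

lemma Jm_transpose : (Jm G)ᵀ = Jm G := by
  ext x y
  rcases x with u | f <;> rcases y with w | g <;>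
    · simp only [Jm, Matrix.transpose_apply, Matrix.of_apply]
      try simp [eq_comm]

lemma Jm_mul_absdT : Jm G * (absd G)ᵀ = (absd G)ᵀ := by
  have := congrArg Matrix.transpose (absd_mul_Jm G)
  rwa [Matrix.transpose_mul, Jm_transpose] at this

lemma absdT_mul_Jm : (absd G)ᵀ * Jm G = -(absd G)ᵀ := by
  have := congrArg Matrix.transpose (Jm_mul_absd G)
  rwa [Matrix.transpose_mul, Jm_transpose, Matrix.transpose_neg] at this

lemma absdT_mul_absdT : (absd G)ᵀ * (absd G)ᵀ = 0 := by
  have := congrArg Matrix.transpose (absd_mul_absd G)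
  rwa [Matrix.transpose_mul, Matrix.transpose_zero] at this

lemma touches_inl_inl (u w : V) : touches G (Sum.inl u) (Sum.inl w) ↔ u = w := by
  constructor
  · rintro ⟨z, hz1, hz2⟩
    simp only [sVerts, Set.mem_singleton_iff] at hz1 hz2
    rw [← hz1, ← hz2]
  · rintro rfl; exact ⟨u, by simp [sVerts], by simp [sVerts]⟩

lemma touches_inl_inr (u : V) (f : G.edgeSet) :
    touches G (Sum.inl u) (Sum.inr f) ↔ u ∈ (f : Sym2 V) := by
  constructor
  · rintro ⟨z, hz1, hz2⟩
    simp only [sVerts, Set.mem_singleton_iff, Set.mem_setOf_eq] at hz1 hz2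
    rwa [hz1] at hz2
  · intro h; exact ⟨u, by simp [sVerts], h⟩

lemma touches_inr_inl (u : V) (f : G.edgeSet) :
    touches G (Sum.inr f) (Sum.inl u) ↔ u ∈ (f : Sym2 V) := by
  constructor
  · rintro ⟨z, hz1, hz2⟩
    simp only [sVerts, Set.mem_singleton_iff, Set.mem_setOf_eq] at hz1 hz2
    rwa [hz2] at hz1
  · intro h; exact ⟨u, h, by simp [sVerts]⟩

lemma touches_inr_self (f : G.edgeSet) : touches G (Sum.inr f) (Sum.inr f) :=
  ⟨(f : Sym2 V).out.1, Sym2.out_fst_mem _, Sym2.out_fst_mem _⟩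

/-- counting common vertices of two edges -/
lemma edge_inter_sum (f g : G.edgeSet) :
    (∑ w : V, (if w ∈ (f : Sym2 V) then (1:ℤ) else 0) *
        (if w ∈ (g : Sym2 V) then (1:ℤ) else 0)) =
      (if touches G (Sum.inr f) (Sum.inr g) then 1 else 0) + (if f = g then 1 else 0) := by
  obtain ⟨fv, hf⟩ := f
  induction fv using Sym2.ind with
  | _ a b =>
  have hab : a ≠ b := by
    intro h; exact G.not_isDiag_of_mem_edgeSet hf (by simp [h])
  have htouch : touches G (Sum.inr ⟨s(a,b), hf⟩) (Sum.inr g) ↔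
      a ∈ (g : Sym2 V) ∨ b ∈ (g : Sym2 V) := by
    constructor
    · rintro ⟨w, hw1, hw2⟩
      simp only [sVerts, Set.mem_setOf_eq] at hw1 hw2
      rcases (Sym2.mem_iff.mp hw1) with h | h <;> subst h
      · exact Or.inl hw2
      · exact Or.inr hw2
    · rintro (h | h)
      · exact ⟨a, by simp [sVerts], h⟩
      · exact ⟨b, by simp [sVerts], h⟩
  have heq : (⟨s(a,b), hf⟩ : G.edgeSet) = g ↔
      a ∈ (g : Sym2 V) ∧ b ∈ (g : Sym2 V) := by
    obtain ⟨gv, hg⟩ := g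
    induction gv using Sym2.ind with
    | _ c d =>
    constructor
    · intro h
      rw [Subtype.mk_eq_mk] at h
      constructor
      · show a ∈ s(c, d)
        rw [← h]; simp
      · show b ∈ s(c, d)
        rw [← h]; simp
    · rintro ⟨h1, h2⟩
      rw [Subtype.mk_eq_mk]
      have h1' : a = c ∨ a = d := Sym2.mem_iff.mp h1
      have h2' : b = c ∨ b = d := Sym2.mem_iff.mp h2
      rcases h1' with h1' | h1' <;> rcases h2' with h2' | h2' <;> subst h1' <;> subst h2' <;>
        first
          | exact absurd rfl hab
          | rfl
          | exact Sym2.eq_swap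
  simp only [htouch, heq]
  have hterm : ∀ w : V,
      ((if w ∈ ((⟨s(a,b), hf⟩ : G.edgeSet) : Sym2 V) then (1:ℤ) else 0) *
        (if w ∈ (g : Sym2 V) then (1:ℤ) else 0)) =
      (if w = a then (if a ∈ (g : Sym2 V) then (1:ℤ) else 0) else 0) +
      (if w = b then (if b ∈ (g : Sym2 V) then (1:ℤ) else 0) else 0) := by
    intro w
    by_cases h1 : w = a
    · subst h1; simp [Sym2.mem_iff, hab]
    · by_cases h2 : w = b
      · subst h2; simp [Sym2.mem_iff, h1]
      · simp [Sym2.mem_iff, h1, h2]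
  rw [Finset.sum_congr rfl (fun w _ => hterm w), Finset.sum_add_distrib,
    Finset.sum_ite_eq' Finset.univ a, Finset.sum_ite_eq' Finset.univ b]
  simp only [Finset.mem_univ, if_true]
  by_cases h1 : a ∈ (g : Sym2 V) <;> by_cases h2 : b ∈ (g : Sym2 V) <;> simp [h1, h2]

lemma connL_eq : connL G = Jm G + absd G + (absd G)ᵀ + absd G * (absd G)ᵀ := by
  ext x y
  rw [Matrix.add_apply, Matrix.add_apply, Matrix.add_apply, Matrix.mul_apply,
    Fintype.sum_sum_type]
  rcases x with u | f <;> rcases y with w | g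
  · simp [connL, Jm, absd, touches_inl_inl, Matrix.transpose_apply]
  · simp [connL, Jm, absd, touches_inl_inr, Matrix.transpose_apply]
  · simp [connL, Jm, absd, touches_inr_inl, Matrix.transpose_apply]
  · have h := edge_inter_sum G f g
    simp only [connL, Jm, absd, Matrix.of_apply, Matrix.transpose_apply,
      mul_zero, zero_mul, Finset.sum_const_zero, add_zero, zero_add] at h ⊢
    rw [h]
    by_cases h1 : touches G (Sum.inr f) (Sum.inr g) <;> by_cases h2 : f = g
    · simp [h1, h2]
    · simp [h1, h2]
    · exact absurd (h2 ▸ touches_inr_self G f) h1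
    · simp [h1, h2]

lemma absH_eq : absH G = absd G * (absd G)ᵀ + (absd G)ᵀ * absd G := by
  rw [absH, sq, add_mul, mul_add, mul_add, absd_mul_absd, absdT_mul_absdT]
  abel

lemma key : connL G * (connL G - absH G) = 1 := by
  have e1 := Jm_mul_Jm G
  have e2 := absd_mul_absd G
  have e3 := absd_mul_Jm G
  have e4 := Jm_mul_absd G
  have e5 := Jm_mul_absdT G
  have e6 := absdT_mul_Jm G
  have e7 := absdT_mul_absdT G
  set a := Jm G with ha
  set d := absd G with hd
  set t := (absd G)ᵀ with ht
  have hsub : connL G - absH G = a + d + t - t * d := by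
    rw [connL_eq, absH_eq]; abel
  rw [hsub, connL_eq, ← ha, ← hd, ← ht]
  have assoc : ∀ {A B C : Matrix (Simplex G) (Simplex G) ℤ},
      A * B = C → ∀ X : Matrix (Simplex G) (Simplex G) ℤ, A * (B * X) = C * X := by
    intro A B C h X; rw [← mul_assoc, h]
  simp only [add_mul, mul_add, sub_mul, mul_sub, mul_assoc]
  simp only [e1, e2, e3, e4, e5, e6, e7,
    assoc e1, assoc e2, assoc e3, assoc e4, assoc e5, assoc e6, assoc e7,
    one_mul, mul_one, zero_mul, mul_zero, neg_mul, mul_neg, neg_neg,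
    sub_zero, zero_sub, add_zero, zero_add]
  abel

/-- Hydrogen identity over finite fields: casting `L` and `|H|` entrywise into a finite
field `F`, the matrix `L` is invertible over `F` with inverse `L - |H|`, i.e. the
hydrogen identity `|H| = L - L⁻¹` holds over `F`. -/
theorem hydrogen_finite_field (F : Type*) [Field F] [Fintype F] :
    (connL G).map (Int.cast : ℤ → F)
        * ((connL G).map (Int.cast : ℤ → F) - (absH G).map (Int.cast : ℤ → F)) = 1 ∧
    ((connL G).map (Int.cast : ℤ → F) - (absH G).map (Int.cast : ℤ → F))
        * (connL G).map (Int.cast : ℤ → F) = 1 := by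
  have hmap : ∀ A B : Matrix (Simplex G) (Simplex G) ℤ, A * B = 1 →
      A.map (Int.cast : ℤ → F) * B.map (Int.cast : ℤ → F) = 1 := by
    intro A B h
    have h2 := congrArg (Matrix.map · ⇑(Int.castRingHom F)) h
    simp only [Matrix.map_mul] at h2
    rw [Matrix.map_one _ (map_zero _) (map_one _)] at h2
    exact h2
  have hsub : (connL G - absH G).map (Int.cast : ℤ → F)
      = (connL G).map (Int.cast : ℤ → F) - (absH G).map (Int.cast : ℤ → F) :=
    Matrix.map_sub _ (fun a b => Int.cast_sub a b) _ _
  have h1 := hmap _ _ (key G)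
  rw [hsub] at h1
  exact ⟨h1, mul_eq_one_comm.mp h1⟩
end

section
/- Trace identity: for every finite simple graph G, tr(|H|²) = 2·tr(L²) − 2·(v + e), where v + e is the total number of simplices of the 1-dimensional complex. -/
set_option linter.unusedSectionVars false

open Matrix

variable {V : Type*} [Fintype V] [DecidableEq V]

variable (G : SimpleGraph V) [DecidableRel G.Adj]

/-! ### Auxiliary material -/

/-- indicator of `u ∈ f` -/
private def mm (u : V) (f : G.edgeSet) : ℤ := if u ∈ (f : Sym2 V) then 1 else 0

private lemma mm_mul (u : V) (f g : G.edgeSet) :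
    mm G u f * mm G u g = if (u ∈ (f : Sym2 V) ∧ u ∈ (g : Sym2 V)) then 1 else 0 := by
  by_cases h1 : u ∈ (f : Sym2 V) <;> by_cases h2 : u ∈ (g : Sym2 V) <;> simp [mm, h1, h2]

private lemma sum_mm (f : G.edgeSet) : ∑ u : V, mm G u f = 2 := by
  obtain ⟨f, hf⟩ := f
  induction f using Sym2.ind with
  | _ a b =>
    have hab : a ≠ b := (G.mem_edgeSet.mp hf).ne
    simp only [mm]
    rw [Finset.sum_boole]
    have : Finset.filter (fun u => u ∈ ((⟨s(a, b), hf⟩ : G.edgeSet) : Sym2 V)) Finset.univ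
        = {a, b} := by
      ext u; simp [Sym2.mem_iff]
    rw [this, Finset.card_insert_of_notMem (by simp [hab]), Finset.card_singleton]
    norm_num

private lemma sum_mm_sq (f : G.edgeSet) : ∑ u : V, mm G u f * mm G u f = 2 := by
  have : ∀ u, mm G u f * mm G u f = mm G u f := by
    intro u; by_cases h : u ∈ (f : Sym2 V) <;> simp [mm, h]
  simp only [this]; exact sum_mm G f

private lemma touches_ee (f g : G.edgeSet) :
    touches G (Sum.inr f) (Sum.inr g) ↔ ∃ w, w ∈ (f : Sym2 V) ∧ w ∈ (g : Sym2 V) := by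
  simp [touches, sVerts]

private lemma c_offdiag (f g : G.edgeSet) (hne : f ≠ g) :
    ∑ u : V, mm G u f * mm G u g
      = if touches G (Sum.inr f) (Sum.inr g) then 1 else 0 := by
  simp only [mm_mul]
  rw [Finset.sum_boole]
  have hcard : (Finset.filter (fun u => u ∈ (f : Sym2 V) ∧ u ∈ (g : Sym2 V))
      Finset.univ).card ≤ 1 := by
    rw [Finset.card_le_one]
    intro a ha b hb
    simp only [Finset.mem_filter] at ha hb
    by_contra hab
    have h1 : (f : Sym2 V) = s(a, b) := (Sym2.mem_and_mem_iff hab).mp ⟨ha.2.1, hb.2.1⟩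
    have h2 : (g : Sym2 V) = s(a, b) := (Sym2.mem_and_mem_iff hab).mp ⟨ha.2.2, hb.2.2⟩
    exact hne (Subtype.ext (h1.trans h2.symm))
  by_cases h : touches G (Sum.inr f) (Sum.inr g)
  · obtain ⟨w, hwf, hwg⟩ := (touches_ee G f g).mp h
    have hpos : 0 < (Finset.filter (fun u => u ∈ (f : Sym2 V) ∧ u ∈ (g : Sym2 V))
        Finset.univ).card :=
      Finset.card_pos.mpr ⟨w, Finset.mem_filter.mpr ⟨Finset.mem_univ w, hwf, hwg⟩⟩
    have hc : (Finset.filter (fun u => u ∈ (f : Sym2 V) ∧ u ∈ (g : Sym2 V))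
        Finset.univ).card = 1 := le_antisymm hcard hpos
    rw [if_pos h, hc]; norm_num
  · have : Finset.filter (fun u => u ∈ (f : Sym2 V) ∧ u ∈ (g : Sym2 V)) Finset.univ = ∅ := by
      ext u
      simp only [Finset.mem_filter, Finset.mem_univ, true_and, Finset.notMem_empty, iff_false]
      intro hu
      exact h ((touches_ee G f g).mpr ⟨u, hu⟩)
    rw [if_neg h, this]; simp

/-- the key per-pair identity: `c(f,g)² = [touch] + 3·[f = g]`. -/
private lemma c_sq (f g : G.edgeSet) :
    (∑ u : V, mm G u f * mm G u g) * (∑ u : V, mm G u g * mm G u f)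
      = (if touches G (Sum.inr f) (Sum.inr g) then 1 else 0)
        + 3 * (if f = g then 1 else 0) := by
  by_cases hfg : f = g
  · subst hfg
    rw [sum_mm_sq]
    have ht : touches G (Sum.inr f) (Sum.inr f) := by
      obtain ⟨fv, hf⟩ := f
      induction fv using Sym2.ind with
      | _ a b => exact (touches_ee G _ _).mpr ⟨a, by simp, by simp⟩
    rw [if_pos ht, if_pos rfl]; ring
  · have hgf : g ≠ f := fun h => hfg h.symm
    rw [c_offdiag G f g hfg, c_offdiag G g f hgf, if_neg hfg]
    have hsymm : touches G (Sum.inr g) (Sum.inr f) ↔ touches G (Sum.inr f) (Sum.inr g) := by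
      rw [touches_ee, touches_ee]
      exact ⟨fun ⟨w, h1, h2⟩ => ⟨w, h2, h1⟩, fun ⟨w, h1, h2⟩ => ⟨w, h2, h1⟩⟩
    by_cases ht : touches G (Sum.inr f) (Sum.inr g)
    · rw [if_pos ht, if_pos (hsymm.mpr ht)]; ring
    · rw [if_neg ht, if_neg (fun h => ht (hsymm.mp h))]; ring

/-- entries of `A = |d| + |d|ᵀ` -/
private lemma A_vv (u v : V) : (absd G + (absd G)ᵀ) (Sum.inl u) (Sum.inl v) = 0 := by
  simp [absd, Matrix.add_apply, Matrix.transpose_apply]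

private lemma A_ee (f g : G.edgeSet) : (absd G + (absd G)ᵀ) (Sum.inr f) (Sum.inr g) = 0 := by
  simp [absd, Matrix.add_apply, Matrix.transpose_apply]

private lemma A_ve (u : V) (f : G.edgeSet) :
    (absd G + (absd G)ᵀ) (Sum.inl u) (Sum.inr f) = mm G u f := by
  simp [absd, mm, Matrix.add_apply, Matrix.transpose_apply]

private lemma A_ev (f : G.edgeSet) (u : V) :
    (absd G + (absd G)ᵀ) (Sum.inr f) (Sum.inl u) = mm G u f := by
  simp [absd, mm, Matrix.add_apply, Matrix.transpose_apply]

private lemma H_vv (u v : V) :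
    absH G (Sum.inl u) (Sum.inl v) = ∑ f : G.edgeSet, mm G u f * mm G v f := by
  simp only [absH, pow_two, Matrix.mul_apply, Fintype.sum_sum_type, A_vv, A_ve, A_ev,
    zero_mul, mul_zero, Finset.sum_const_zero, zero_add]

private lemma H_ee (f g : G.edgeSet) :
    absH G (Sum.inr f) (Sum.inr g) = ∑ u : V, mm G u f * mm G u g := by
  simp only [absH, pow_two, Matrix.mul_apply, Fintype.sum_sum_type, A_ee, A_ve, A_ev,
    zero_mul, mul_zero, Finset.sum_const_zero, add_zero]

private lemma H_ve (u : V) (f : G.edgeSet) : absH G (Sum.inl u) (Sum.inr f) = 0 := by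
  simp only [absH, pow_two, Matrix.mul_apply, Fintype.sum_sum_type, A_vv, A_ee, A_ve, A_ev,
    zero_mul, mul_zero, Finset.sum_const_zero, add_zero, zero_add]

private lemma H_ev (f : G.edgeSet) (u : V) : absH G (Sum.inr f) (Sum.inl u) = 0 := by
  simp only [absH, pow_two, Matrix.mul_apply, Fintype.sum_sum_type, A_vv, A_ee, A_ve, A_ev,
    zero_mul, mul_zero, Finset.sum_const_zero, add_zero, zero_add]

private lemma trace_sq (M : Matrix (Simplex G) (Simplex G) ℤ) :
    Matrix.trace (M ^ 2) = ∑ x : Simplex G, ∑ y : Simplex G, M x y * M y x := by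
  simp [Matrix.trace, pow_two, Matrix.mul_apply, Matrix.diag]

private lemma quad_comm (F : V → V → G.edgeSet → G.edgeSet → ℤ) :
    ∑ u : V, ∑ v : V, ∑ f : G.edgeSet, ∑ g : G.edgeSet, F u v f g
      = ∑ f : G.edgeSet, ∑ g : G.edgeSet, ∑ u : V, ∑ v : V, F u v f g := by
  calc ∑ u : V, ∑ v : V, ∑ f : G.edgeSet, ∑ g : G.edgeSet, F u v f g
      = ∑ u : V, ∑ f : G.edgeSet, ∑ v : V, ∑ g : G.edgeSet, F u v f g :=
        Finset.sum_congr rfl fun u _ => Finset.sum_comm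
    _ = ∑ f : G.edgeSet, ∑ u : V, ∑ v : V, ∑ g : G.edgeSet, F u v f g := Finset.sum_comm
    _ = ∑ f : G.edgeSet, ∑ u : V, ∑ g : G.edgeSet, ∑ v : V, F u v f g :=
        Finset.sum_congr rfl fun f _ => Finset.sum_congr rfl fun u _ => Finset.sum_comm
    _ = ∑ f : G.edgeSet, ∑ g : G.edgeSet, ∑ u : V, ∑ v : V, F u v f g :=
        Finset.sum_congr rfl fun f _ => Finset.sum_comm

private lemma vblock :
    (∑ u : V, ∑ v : V, (∑ f : G.edgeSet, mm G u f * mm G v f) *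
        (∑ g : G.edgeSet, mm G v g * mm G u g))
      = ∑ f : G.edgeSet, ∑ g : G.edgeSet,
          (∑ u : V, mm G u f * mm G u g) * (∑ v : V, mm G v g * mm G v f) := by
  simp only [Finset.sum_mul_sum]
  rw [quad_comm]
  refine Finset.sum_congr rfl fun f _ => Finset.sum_congr rfl fun g _ => ?_
  refine Finset.sum_congr rfl fun u _ => Finset.sum_congr rfl fun v _ => ?_
  ring

private lemma L_vv (u v : V) : connL G (Sum.inl u) (Sum.inl v) = if u = v then 1 else 0 := by
  simp only [connL, Matrix.of_apply]
  congr 1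
  simp only [eq_iff_iff]
  constructor
  · rintro ⟨w, hw1, hw2⟩
    simp only [sVerts, Set.mem_singleton_iff] at hw1 hw2
    exact hw1 ▸ hw2 ▸ rfl
  · rintro rfl
    exact ⟨u, by simp [sVerts], by simp [sVerts]⟩

private lemma L_ve (u : V) (f : G.edgeSet) :
    connL G (Sum.inl u) (Sum.inr f) = mm G u f := by
  simp only [connL, Matrix.of_apply, mm]
  congr 1
  simp only [eq_iff_iff]
  constructor
  · rintro ⟨w, hw1, hw2⟩
    simp only [sVerts, Set.mem_singleton_iff] at hw1
    subst hw1; exact hw2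
  · intro h; exact ⟨u, by simp [sVerts], h⟩

private lemma L_ev (f : G.edgeSet) (u : V) :
    connL G (Sum.inr f) (Sum.inl u) = mm G u f := by
  simp only [connL, Matrix.of_apply, mm]
  congr 1
  simp only [eq_iff_iff]
  constructor
  · rintro ⟨w, hw1, hw2⟩
    simp only [sVerts, Set.mem_singleton_iff] at hw2
    subst hw2; exact hw1
  · intro h; exact ⟨u, h, by simp [sVerts]⟩

private lemma sum_ite_diag :
    (∑ f : G.edgeSet, ∑ g : G.edgeSet, (if f = g then (1 : ℤ) else 0))
      = (Fintype.card G.edgeSet : ℤ) := by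
  simp [Finset.sum_ite_eq, Finset.card_univ]

/-- Trace identity: `tr(|H|²) = 2 tr(L²) - 2(v+e)`. -/
theorem trace_identity :
    Matrix.trace (absH G ^ 2)
      = 2 * Matrix.trace (connL G ^ 2)
        - 2 * ((Fintype.card V : ℤ) + (Fintype.card G.edgeSet : ℤ)) := by
  set e : ℤ := (Fintype.card G.edgeSet : ℤ) with he
  set v : ℤ := (Fintype.card V : ℤ) with hv
  set T : ℤ := ∑ f : G.edgeSet, ∑ g : G.edgeSet,
      (if touches G (Sum.inr f) (Sum.inr g) then (1 : ℤ) else 0) with hT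
  have hL : Matrix.trace (connL G ^ 2) = v + 4 * e + T := by
    rw [trace_sq]
    rw [Fintype.sum_sum_type]
    simp only [Fintype.sum_sum_type]
    have hmm_sq : ∀ (u : V) (f : G.edgeSet), mm G u f * mm G u f = mm G u f := by
      intro u f; by_cases h : u ∈ (f : Sym2 V) <;> simp [mm, h]
    have hvv : (∑ u : V, ∑ w : V,
        connL G (Sum.inl u) (Sum.inl w) * connL G (Sum.inl w) (Sum.inl u)) = v := by
      simp only [L_vv]
      have : ∀ u w : V, (if u = w then (1:ℤ) else 0) * (if w = u then 1 else 0)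
          = if u = w then 1 else 0 := by
        intro u w; by_cases h : u = w <;> simp [h]
      simp only [this]
      simp [Finset.sum_ite_eq, Finset.card_univ, hv]
    have hve : (∑ u : V, ∑ f : G.edgeSet,
        connL G (Sum.inl u) (Sum.inr f) * connL G (Sum.inr f) (Sum.inl u)) = 2 * e := by
      simp only [L_ve, L_ev, hmm_sq]
      rw [Finset.sum_comm]
      simp [sum_mm, Finset.sum_const, Finset.card_univ, he, mul_comm]
    have hev : (∑ f : G.edgeSet, ∑ u : V,
        connL G (Sum.inr f) (Sum.inl u) * connL G (Sum.inl u) (Sum.inr f)) = 2 * e := by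
      simp only [L_ve, L_ev, hmm_sq]
      simp [sum_mm, Finset.sum_const, Finset.card_univ, he, mul_comm]
    have hee : (∑ f : G.edgeSet, ∑ g : G.edgeSet,
        connL G (Sum.inr f) (Sum.inr g) * connL G (Sum.inr g) (Sum.inr f)) = T := by
      have hsymm : ∀ f g : G.edgeSet, touches G (Sum.inr g) (Sum.inr f)
          ↔ touches G (Sum.inr f) (Sum.inr g) := by
        intro f g
        rw [touches_ee, touches_ee]
        exact ⟨fun ⟨w, h1, h2⟩ => ⟨w, h2, h1⟩, fun ⟨w, h1, h2⟩ => ⟨w, h2, h1⟩⟩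
      have : ∀ f g : G.edgeSet, connL G (Sum.inr f) (Sum.inr g) *
          connL G (Sum.inr g) (Sum.inr f)
          = if touches G (Sum.inr f) (Sum.inr g) then (1:ℤ) else 0 := by
        intro f g
        simp only [connL, Matrix.of_apply]
        by_cases h : touches G (Sum.inr f) (Sum.inr g)
        · rw [if_pos h, if_pos ((hsymm f g).mpr h)]; norm_num
        · rw [if_neg h, if_neg (fun hh => h ((hsymm f g).mp hh))]; norm_num
      simp only [this, hT]
    simp only [Finset.sum_add_distrib]
    rw [hvv, hve, hev, hee]; ring
  have hH : Matrix.trace (absH G ^ 2) = 2 * (T + 3 * e) := by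
    rw [trace_sq]
    simp only [Fintype.sum_sum_type, H_vv, H_ee, H_ve, H_ev, zero_mul, mul_zero,
      Finset.sum_const_zero, add_zero, zero_add]
    rw [vblock]
    have : (∑ f : G.edgeSet, ∑ g : G.edgeSet,
        (∑ u : V, mm G u f * mm G u g) * (∑ u : V, mm G u g * mm G u f))
        = T + 3 * e := by
      simp only [c_sq]
      simp only [Finset.sum_add_distrib, ← Finset.mul_sum]
      rw [sum_ite_diag, ← hT, he]
    rw [this]
    ring
  rw [hH, hL]; ring
end
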